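/- Let Y = {(q₁,q₂,q₃) ∈ ℍ³ : q₁i + q₂j + q₃k = 0} with Y' = {(q₁,q₂,q₃) ∈ Y : each qₘ ∈ 𝕀}. Then Y is an ℍ-submodule of ℍ³ isomorphic to ℍ², dim_ℝ Y' = 5, and the map ν(q₁,q₂,q₃) = i q₁ + j q₂ + k q₃ has image 𝕀 and kernel exactly Y'. -/

import Mathlib

open Module

local notation "ℍ" => Quaternion ℝ

noncomputable section

def qi : ℍ := ⟨0, 1, 0, 0⟩
def qj : ℍ := ⟨0, 0, 1, 0⟩
def qk : ℍ := ⟨0, 0, 0, 1⟩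

/-- `Y = {(q₁,q₂,q₃) ∈ ℍ³ : q₁ i + q₂ j + q₃ k = 0}` is a left `ℍ`-submodule of `ℍ³`. -/
def Ysub : Submodule ℍ (Fin 3 → ℍ) where
  carrier := {f | f 0 * qi + f 1 * qj + f 2 * qk = 0}
  zero_mem' := by simp
  add_mem' := by
    intro a b ha hb
    simp only [Set.mem_setOf_eq, Pi.add_apply] at *
    rw [add_mul, add_mul, add_mul]
    rw [show a 0 * qi + b 0 * qi + (a 1 * qj + b 1 * qj) + (a 2 * qk + b 2 * qk)
          = (a 0 * qi + a 1 * qj + a 2 * qk) + (b 0 * qi + b 1 * qj + b 2 * qk) by abel]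
    rw [ha, hb, add_zero]
  smul_mem' := by
    intro c f hf
    simp only [Set.mem_setOf_eq, Pi.smul_apply, smul_eq_mul] at *
    rw [mul_assoc, mul_assoc, mul_assoc, ← mul_add, ← mul_add, hf, mul_zero]

/-- `Y' = {(q₁,q₂,q₃) ∈ Y : each qₘ imaginary}`, a real subspace of `ℍ³`. -/
def YsubP : Submodule ℝ (Fin 3 → ℍ) where
  carrier := {f | f 0 * qi + f 1 * qj + f 2 * qk = 0 ∧ ∀ m, (f m).re = 0}
  zero_mem' := by constructor <;> simp <;> rfl
  add_mem' := by
    rintro a b ⟨ha1, ha2⟩ ⟨hb1, hb2⟩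
    refine ⟨?_, fun m => ?_⟩
    · simp only [Pi.add_apply]
      rw [add_mul, add_mul, add_mul]
      rw [show a 0 * qi + b 0 * qi + (a 1 * qj + b 1 * qj) + (a 2 * qk + b 2 * qk)
            = (a 0 * qi + a 1 * qj + a 2 * qk) + (b 0 * qi + b 1 * qj + b 2 * qk) by abel]
      rw [ha1, hb1, add_zero]
    · simp [ha2 m, hb2 m]
  smul_mem' := by
    rintro r f ⟨h1, h2⟩
    refine ⟨?_, fun m => ?_⟩
    · simp only [Pi.smul_apply]
      rw [smul_mul_assoc, smul_mul_assoc, smul_mul_assoc, ← smul_add, ← smul_add, h1, smul_zero]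
    · simp [h2 m]

/-- `ν(q₁,q₂,q₃) = i q₁ + j q₂ + k q₃`. -/
def nuY (f : Fin 3 → ℍ) : ℍ := qi * f 0 + qj * f 1 + qk * f 2

attribute [local simp] Quaternion.re_zero Quaternion.imI_zero Quaternion.imJ_zero Quaternion.imK_zero

@[simp] lemma mul_mk_re (a : ℍ) (x y z w : ℝ) :
    (@HMul.hMul ℍ ℍ ℍ _ a ⟨x, y, z, w⟩).re = a.re * x - a.imI * y - a.imJ * z - a.imK * w := Quaternion.re_mul _ _
@[simp] lemma mul_mk_imI (a : ℍ) (x y z w : ℝ) :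
    (@HMul.hMul ℍ ℍ ℍ _ a ⟨x, y, z, w⟩).imI = a.re * y + a.imI * x + a.imJ * w - a.imK * z := Quaternion.imI_mul _ _
@[simp] lemma mul_mk_imJ (a : ℍ) (x y z w : ℝ) :
    (@HMul.hMul ℍ ℍ ℍ _ a ⟨x, y, z, w⟩).imJ = a.re * z - a.imI * w + a.imJ * x + a.imK * y := Quaternion.imJ_mul _ _
@[simp] lemma mul_mk_imK (a : ℍ) (x y z w : ℝ) :
    (@HMul.hMul ℍ ℍ ℍ _ a ⟨x, y, z, w⟩).imK = a.re * w + a.imI * z - a.imJ * y + a.imK * x := Quaternion.imK_mul _ _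
@[simp] lemma mk_mul_re (a : ℍ) (x y z w : ℝ) :
    (@HMul.hMul ℍ ℍ ℍ _ ⟨x, y, z, w⟩ a).re = x * a.re - y * a.imI - z * a.imJ - w * a.imK := Quaternion.re_mul _ _
@[simp] lemma mk_mul_imI (a : ℍ) (x y z w : ℝ) :
    (@HMul.hMul ℍ ℍ ℍ _ ⟨x, y, z, w⟩ a).imI = x * a.imI + y * a.re + z * a.imK - w * a.imJ := Quaternion.imI_mul _ _
@[simp] lemma mk_mul_imJ (a : ℍ) (x y z w : ℝ) :
    (@HMul.hMul ℍ ℍ ℍ _ ⟨x, y, z, w⟩ a).imJ = x * a.imJ - y * a.imK + z * a.re + w * a.imI := Quaternion.imJ_mul _ _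
@[simp] lemma mk_mul_imK (a : ℍ) (x y z w : ℝ) :
    (@HMul.hMul ℍ ℍ ℍ _ ⟨x, y, z, w⟩ a).imK = x * a.imK + y * a.imJ - z * a.imI + w * a.re := Quaternion.imK_mul _ _

@[simp] lemma mk_mul_mk_re (a b c d x y z w : ℝ) :
    (@HMul.hMul ℍ ℍ ℍ _ ⟨a, b, c, d⟩ ⟨x, y, z, w⟩).re = a * x - b * y - c * z - d * w :=
  Quaternion.re_mul _ _
@[simp] lemma mk_mul_mk_imI (a b c d x y z w : ℝ) :
    (@HMul.hMul ℍ ℍ ℍ _ ⟨a, b, c, d⟩ ⟨x, y, z, w⟩).imI = a * y + b * x + c * w - d * z :=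
  Quaternion.imI_mul _ _
@[simp] lemma mk_mul_mk_imJ (a b c d x y z w : ℝ) :
    (@HMul.hMul ℍ ℍ ℍ _ ⟨a, b, c, d⟩ ⟨x, y, z, w⟩).imJ = a * z - b * w + c * x + d * y :=
  Quaternion.imJ_mul _ _
@[simp] lemma mk_mul_mk_imK (a b c d x y z w : ℝ) :
    (@HMul.hMul ℍ ℍ ℍ _ ⟨a, b, c, d⟩ ⟨x, y, z, w⟩).imK = a * w + b * z - c * y + d * x :=
  Quaternion.imK_mul _ _
@[simp] lemma mk_add_mk' (a b c d x y z w : ℝ) :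
    (@HAdd.hAdd ℍ ℍ ℍ _ ⟨a, b, c, d⟩ ⟨x, y, z, w⟩) = (⟨a + x, b + y, c + z, d + w⟩ : ℍ) := rfl
@[simp] lemma smul_mk' (r x y z w : ℝ) :
    (@HSMul.hSMul ℝ ℍ ℍ _ r ⟨x, y, z, w⟩) = (⟨r * x, r * y, r * z, r * w⟩ : ℍ) := rfl
@[simp] lemma mk_eq' (a b c d : ℝ) (q : ℍ) :
    (@Eq ℍ ⟨a, b, c, d⟩ q) ↔ a = q.re ∧ b = q.imI ∧ c = q.imJ ∧ d = q.imK :=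
  ⟨fun h => h ▸ ⟨rfl, rfl, rfl, rfl⟩, fun ⟨h1, h2, h3, h4⟩ => QuaternionAlgebra.ext h1 h2 h3 h4⟩
@[simp] lemma eq_mk' (a b c d : ℝ) (q : ℍ) :
    (@Eq ℍ q ⟨a, b, c, d⟩) ↔ q.re = a ∧ q.imI = b ∧ q.imJ = c ∧ q.imK = d :=
  ⟨fun h => h ▸ ⟨rfl, rfl, rfl, rfl⟩, fun ⟨h1, h2, h3, h4⟩ => QuaternionAlgebra.ext h1 h2 h3 h4⟩
@[simp] lemma mk_eq_mk' (a b c d x y z w : ℝ) :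
    (@Eq ℍ ⟨a, b, c, d⟩ ⟨x, y, z, w⟩) ↔ a = x ∧ b = y ∧ c = z ∧ d = w := mk_eq' _ _ _ _ _

lemma mem_Ysub (f : Fin 3 → ℍ) : f ∈ Ysub ↔ f 0 * qi + f 1 * qj + f 2 * qk = 0 := Iff.rfl

lemma mem_YsubP (f : Fin 3 → ℍ) :
    f ∈ YsubP ↔ (f 0 * qi + f 1 * qj + f 2 * qk = 0 ∧ ∀ m, (f m).re = 0) := Iff.rfl

lemma third_mem (a b : ℍ) : a * qi + b * qj + (-(a * qj) + b * qi) * qk = 0 := by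
  simp [Quaternion.ext_iff, qi, qj, qk]
  and_intros <;> ring

lemma third_eq (a b c : ℍ) (h : a * qi + b * qj + c * qk = 0) :
    -(a * qj) + b * qi = c := by
  simp [Quaternion.ext_iff, qi, qj, qk] at h ⊢
  obtain ⟨h1, h2, h3, h4⟩ := h
  and_intros <;> linarith

def Yequiv : ↥Ysub ≃ₗ[ℍ] (Fin 2 → ℍ) where
  toFun f := ![f.1 0, f.1 1]
  map_add' a b := by
    funext m; fin_cases m <;> simp
  map_smul' c f := by
    funext m; fin_cases m <;> simp
  invFun g := ⟨![g 0, g 1, -(g 0 * qj) + g 1 * qi], by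
    rw [mem_Ysub]
    simpa using third_mem (g 0) (g 1)⟩
  left_inv f := by
    apply Subtype.ext
    funext m
    fin_cases m
    · simp
    · simp
    · simpa using third_eq (f.1 0) (f.1 1) (f.1 2) f.2
  right_inv g := by
    funext m; fin_cases m <;> simp

def phiY : (Fin 5 → ℝ) →ₗ[ℝ] (Fin 3 → ℍ) where
  toFun v := ![⟨0, v 0, v 1, v 2⟩, ⟨0, v 1, v 3, v 4⟩, ⟨0, v 2, v 4, -v 0 - v 3⟩]
  map_add' v w := by
    funext m
    fin_cases m <;> · simp [Quaternion.ext_iff]; try ring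
  map_smul' r v := by
    funext m
    fin_cases m <;> · simp [Quaternion.ext_iff]; try ring

lemma phiY_inj : Function.Injective phiY := by
  intro v w h
  have h0 := congrFun h 0
  have h1 := congrFun h 1
  simp [phiY, Quaternion.ext_iff] at h0 h1
  funext x
  fin_cases x
  · exact h0.1
  · exact h0.2.1
  · exact h0.2.2
  · exact h1.2.1
  · exact h1.2.2

lemma phiY_range : LinearMap.range phiY = YsubP := by
  ext f
  simp only [LinearMap.mem_range]
  constructor
  · rintro ⟨v, rfl⟩
    rw [mem_YsubP]
    refine ⟨?_, fun m => ?_⟩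
    · simp [phiY, Quaternion.ext_iff, qi, qj, qk]
    · fin_cases m <;> rfl
  · rw [mem_YsubP]
    rintro ⟨heq, hre⟩
    refine ⟨![(f 0).imI, (f 0).imJ, (f 0).imK, (f 1).imJ, (f 1).imK], ?_⟩
    have r0 := hre 0
    have r1 := hre 1
    have r2 := hre 2
    simp [Quaternion.ext_iff, qi, qj, qk] at heq
    obtain ⟨e1, e2, e3, e4⟩ := heq
    funext m
    fin_cases m <;>
      · simp [phiY, Quaternion.ext_iff]
        and_intros <;> linarith

/-- `Y` is an `ℍ`-submodule of `ℍ³` isomorphic to `ℍ²`,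
`dim_ℝ Y' = 5`, and `ν` has image the imaginary quaternions and kernel exactly `Y'`. -/
theorem Y_module_structure :
    Nonempty (↥Ysub ≃ₗ[ℍ] (Fin 2 → ℍ)) ∧
    finrank ℝ ↥YsubP = 5 ∧
    (nuY '' (Ysub : Set (Fin 3 → ℍ)) = {x : ℍ | x.re = 0}) ∧
    ({f ∈ (Ysub : Set (Fin 3 → ℍ)) | nuY f = 0} = (YsubP : Set (Fin 3 → ℍ))) := by
  refine ⟨⟨Yequiv⟩, ?_, ?_, ?_⟩
  · have e2 := LinearEquiv.ofInjective phiY phiY_inj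
    have : finrank ℝ (Fin 5 → ℝ) = finrank ℝ ↥(LinearMap.range phiY) := e2.finrank_eq
    rw [phiY_range] at this
    simpa using this.symm
  · ext x
    simp only [Set.mem_image, SetLike.mem_coe, Set.mem_setOf_eq]
    constructor
    · rintro ⟨f, hf, rfl⟩
      rw [mem_Ysub] at hf
      simp [Quaternion.ext_iff, qi, qj, qk] at hf
      simp [nuY, qi, qj, qk]
      linarith [hf.1]
    · intro hx
      refine ⟨![⟨x.imI/2, 0, x.imK/2, 0⟩, ⟨x.imJ/2, 0, 0, 0⟩,
        ⟨x.imK/2, x.imJ/2, -x.imI/2, 0⟩], ?_, ?_⟩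
      · rw [mem_Ysub]
        simp [Quaternion.ext_iff, qi, qj, qk]
        and_intros <;> ring
      · simp [nuY, Quaternion.ext_iff, qi, qj, qk]
        and_intros <;> (first | exact hx.symm | ring)
  · ext f
    simp only [Set.mem_setOf_eq, SetLike.mem_coe, mem_Ysub, mem_YsubP]
    constructor
    · rintro ⟨heq, hnu⟩
      refine ⟨heq, fun m => ?_⟩
      simp [Quaternion.ext_iff, qi, qj, qk] at heq
      simp [nuY, Quaternion.ext_iff, qi, qj, qk] at hnu
      obtain ⟨e1, e2, e3, e4⟩ := heq
      obtain ⟨n1, n2, n3, n4⟩ := hnu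
      fin_cases m
      · show (f 0).re = 0; linarith
      · show (f 1).re = 0; linarith
      · show (f 2).re = 0; linarith
    · rintro ⟨heq, hre⟩
      refine ⟨heq, ?_⟩
      have r0 := hre 0
      have r1 := hre 1
      have r2 := hre 2
      simp [Quaternion.ext_iff, qi, qj, qk] at heq
      obtain ⟨e1, e2, e3, e4⟩ := heq
      simp [nuY, Quaternion.ext_iff, qi, qj, qk]
      and_intros <;> linarith

end
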